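/- The reachability Gramian, given by the integral 𝒢 = (1/2π) ∫₀^{2π} (I − e^{iθ}A)⁻¹ B B* ((I − e^{iθ}A)⁻¹)* dθ, satisfies the discrete-time Lyapunov equation 𝒢 = A 𝒢 A* + B B*. -/

import Mathlib

open Matrix

private lemma diff_entries_det {m : ℕ} {f : ℂ → Matrix (Fin m) (Fin m) ℂ}
    (hf : ∀ i j, Differentiable ℂ fun z => f z i j) :
    Differentiable ℂ fun z => (f z).det := by
  simp only [Matrix.det_apply']
  refine Differentiable.fun_sum fun σ _ => Differentiable.const_mul ?_ _
  exact Differentiable.fun_finset_prod fun i _ => hf _ _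

private lemma det_one_sub_ne_zero {n : ℕ} {A : Matrix (Fin n) (Fin n) ℂ}
    (hA : ∀ μ ∈ spectrum ℂ A, ‖μ‖ < 1) {z : ℂ} (hz : ‖z‖ ≤ 1) :
    Matrix.det (1 - z • A) ≠ 0 := by
  intro h
  have hz0 : z ≠ 0 := by
    rintro rfl; simp at h
  have hzz : z • (z⁻¹ • (1 : Matrix (Fin n) (Fin n) ℂ) - A) = 1 - z • A := by
    rw [smul_sub, smul_smul, mul_inv_cancel₀ hz0, one_smul]
  have hdet0 : Matrix.det (z⁻¹ • (1 : Matrix (Fin n) (Fin n) ℂ) - A) = 0 := by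
    have := congrArg Matrix.det hzz
    rw [Matrix.det_smul, h] at this
    exact (mul_eq_zero.mp this).resolve_left (pow_ne_zero _ hz0)
  have hmem : z⁻¹ ∈ spectrum ℂ A := by
    rw [spectrum.mem_iff, Algebra.algebraMap_eq_smul_one, Matrix.isUnit_iff_isUnit_det, hdet0]
    exact fun hu => hu.ne_zero rfl
  have h1 : ‖z⁻¹‖ < 1 := hA _ hmem
  rw [norm_inv] at h1
  have : (1:ℝ) ≤ ‖z‖⁻¹ := (one_le_inv₀ (norm_pos_iff.mpr hz0)).2 hz
  linarith

private lemma integral_exp_inv_entry {n : ℕ} {A : Matrix (Fin n) (Fin n) ℂ}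
    (hA : ∀ μ ∈ spectrum ℂ A, ‖μ‖ < 1) (k l : Fin n) :
    ∫ θ in (0:ℝ)..(2 * Real.pi),
      Complex.exp (θ * Complex.I) * (((1 - Complex.exp (θ * Complex.I) • A)⁻¹ :
        Matrix (Fin n) (Fin n) ℂ) k l) = 0 := by
  set F : ℂ → ℂ := fun z =>
    (Matrix.det (1 - z • A))⁻¹ * Matrix.adjugate (1 - z • A) k l with hF
  have hentry : ∀ z : ℂ, ((1 - z • A)⁻¹ : Matrix (Fin n) (Fin n) ℂ) k l = F z := by
    intro z
    rw [Matrix.inv_def, Matrix.smul_apply, hF]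
    simp [Ring.inverse_eq_inv', smul_eq_mul]
  have hent : ∀ i j, Differentiable ℂ fun w : ℂ => (1 - w • A) i j := by
    intro i j
    simp only [Matrix.sub_apply, Matrix.smul_apply, Matrix.one_apply, smul_eq_mul]
    exact (differentiable_const _).sub (differentiable_id.mul (differentiable_const _))
  have hdet : Differentiable ℂ fun w : ℂ => Matrix.det (1 - w • A) := diff_entries_det hent
  have hadj : Differentiable ℂ fun w : ℂ => Matrix.adjugate (1 - w • A) k l := by
    simp only [Matrix.adjugate_apply]
    apply diff_entries_det
    intro i j
    rcases eq_or_ne i l with h | h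
    · simp only [Matrix.updateRow_apply, h, if_pos rfl]
      exact differentiable_const _
    · simp only [Matrix.updateRow_apply, if_neg h]
      exact hent i j
  have hdiff : ∀ z ∈ Metric.closedBall (0:ℂ) 1, DifferentiableAt ℂ F z := by
    intro z hz
    have hz1 : ‖z‖ ≤ 1 := by
      simpa [Metric.mem_closedBall, Complex.dist_eq] using hz
    exact (hdet.differentiableAt.inv (det_one_sub_ne_zero hA hz1)).mul hadj.differentiableAt
  have h0 : (∮ z in C((0:ℂ), 1), F z) = 0 :=
    Complex.circleIntegral_eq_zero_of_differentiable_on_off_countable zero_le_one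
      Set.countable_empty
      (fun z hz => (hdiff z hz).continuousAt.continuousWithinAt)
      (fun z hz => hdiff z (Metric.ball_subset_closedBall hz.1))
  have hcirc : (∮ z in C((0:ℂ), 1), F z)
      = Complex.I * ∫ θ in (0:ℝ)..(2 * Real.pi),
          Complex.exp (θ * Complex.I) * F (Complex.exp (θ * Complex.I)) := by
    rw [circleIntegral, ← intervalIntegral.integral_const_mul]
    refine intervalIntegral.integral_congr fun θ _ => ?_
    simp [deriv_circleMap, circleMap, smul_eq_mul]
    ring
  rw [hcirc] at h0
  have := (mul_eq_zero.mp h0).resolve_left Complex.I_ne_zero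
  simpa only [hentry] using this

private lemma intervalIntegral_conj {f : ℝ → ℂ} {a b : ℝ} :
    (∫ θ in a..b, (starRingEnd ℂ) (f θ)) = (starRingEnd ℂ) (∫ θ in a..b, f θ) := by
  rw [intervalIntegral, intervalIntegral, integral_conj, integral_conj, ← map_sub]

/-- The reachability Gramian, given by the entrywise integral
`𝒢 = (1/2π) ∫₀^{2π} (I − e^{iθ}A)⁻¹ B B* ((I − e^{iθ}A)⁻¹)* dθ`,
satisfies the discrete-time Lyapunov equation `𝒢 = A 𝒢 A* + B B*`. -/
theorem gramian_integral_satisfies_lyapunov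
    {n : ℕ} (hn : 1 ≤ n)
    (A : Matrix (Fin n) (Fin n) ℂ) (B : Matrix (Fin n) (Fin 1) ℂ)
    (hA : ∀ μ ∈ spectrum ℂ A, ‖μ‖ < 1)
    (𝒢 : Matrix (Fin n) (Fin n) ℂ)
    (h𝒢 : 𝒢 = Matrix.of fun i j =>
      (1 / (2 * Real.pi) : ℂ) * ∫ θ in (0:ℝ)..(2 * Real.pi),
        (((1 - Complex.exp (θ * Complex.I) • A)⁻¹ * B * Bᴴ *
          ((1 - Complex.exp (θ * Complex.I) • A)⁻¹)ᴴ :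
          Matrix (Fin n) (Fin n) ℂ) i j)) :
    𝒢 = A * 𝒢 * Aᴴ + B * Bᴴ := by
  set e : ℝ → ℂ := fun θ => Complex.exp (θ * Complex.I) with hedef
  set M : ℝ → Matrix (Fin n) (Fin n) ℂ := fun θ => (1 - e θ • A)⁻¹ with hMdef
  set C : Matrix (Fin n) (Fin n) ℂ := B * Bᴴ with hCdef
  have habs : ∀ θ : ℝ, ‖e θ‖ = 1 := by
    intro θ
    rw [hedef, Complex.norm_exp_ofReal_mul_I]
  have hdet : ∀ θ : ℝ, Matrix.det (1 - e θ • A) ≠ 0 := fun θ =>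
    det_one_sub_ne_zero hA (le_of_eq (habs θ))
  have hkey : ∀ k l, (∫ θ in (0:ℝ)..(2 * Real.pi), e θ * M θ k l) = 0 := by
    intro k l
    simp only [hedef, hMdef]
    exact integral_exp_inv_entry hA k l
  -- continuity
  have hecont : Continuous e := by
    rw [hedef]
    exact Complex.continuous_exp.comp (Complex.continuous_ofReal.mul continuous_const)
  have hMcont : Continuous M := by
    have hW : Continuous fun θ : ℝ => (1 : Matrix (Fin n) (Fin n) ℂ) - e θ • A :=
      continuous_const.sub (hecont.smul continuous_const)
    apply continuous_matrix
    intro i j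
    have hrw : (fun θ => M θ i j)
        = fun θ => (Matrix.det (1 - e θ • A))⁻¹ * Matrix.adjugate (1 - e θ • A) i j := by
      funext θ
      simp only [hMdef]
      rw [Matrix.inv_def, Matrix.smul_apply]
      simp [Ring.inverse_eq_inv', smul_eq_mul]
    rw [hrw]
    exact (hW.matrix_det.inv₀ hdet).mul (hW.matrix_adjugate.matrix_elem i j)
  have hPC : Continuous fun θ => M θ * C * (M θ)ᴴ :=
    (hMcont.matrix_mul continuous_const).matrix_mul hMcont.matrix_conjTranspose
  have hAMC : Continuous fun θ => A * M θ * C :=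
    (continuous_const.matrix_mul hMcont).matrix_mul continuous_const
  have hCMA : Continuous fun θ => C * (M θ)ᴴ * Aᴴ :=
    (continuous_const.matrix_mul hMcont.matrix_conjTranspose).matrix_mul continuous_const
  have hAPA : Continuous fun θ => A * (M θ * C * (M θ)ᴴ) * Aᴴ :=
    (continuous_const.matrix_mul hPC).matrix_mul continuous_const
  have hconjcont : Continuous fun θ => (starRingEnd ℂ) (e θ) :=
    Complex.continuous_conj.comp hecont
  -- the Gramian entries
  have h𝒢' : ∀ k l, 𝒢 k l = (1 / (2 * Real.pi) : ℂ) *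
      ∫ θ in (0:ℝ)..(2 * Real.pi), (M θ * C * (M θ)ᴴ) k l := by
    intro k l
    rw [h𝒢, Matrix.of_apply]
    congr 1
    refine intervalIntegral.integral_congr fun θ _ => ?_
    simp only [hMdef, hedef, hCdef]
    rw [Matrix.mul_assoc ((1 - Complex.exp (θ * Complex.I) • A)⁻¹) B Bᴴ]
  -- algebraic identity
  have hMe : ∀ θ : ℝ, M θ = 1 + e θ • (A * M θ) := by
    intro θ
    have hu : IsUnit (1 - e θ • A).det := isUnit_iff_ne_zero.mpr (hdet θ)
    have h1 : (1 - e θ • A) * M θ = 1 := by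
      simp only [hMdef]
      exact Matrix.mul_nonsing_inv _ hu
    have h2 : M θ - e θ • (A * M θ) = 1 := by
      rw [← h1, Matrix.sub_mul, Matrix.one_mul, Matrix.smul_mul]
    exact sub_eq_iff_eq_add.mp h2
  have hcconj : ∀ θ : ℝ, (starRingEnd ℂ) (e θ) * e θ = 1 := by
    intro θ
    rw [mul_comm, Complex.mul_conj, Complex.normSq_eq_norm_sq, habs θ]
    norm_num
  have hP : ∀ θ : ℝ, M θ * C * (M θ)ᴴ
      = C + e θ • (A * M θ * C) + (starRingEnd ℂ) (e θ) • (C * (M θ)ᴴ * Aᴴ)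
        + A * (M θ * C * (M θ)ᴴ) * Aᴴ := by
    intro θ
    conv_lhs => rw [hMe θ]
    simp only [conjTranspose_add, conjTranspose_one, conjTranspose_smul, conjTranspose_mul,
      Matrix.add_mul, Matrix.mul_add, Matrix.mul_one, Matrix.one_mul,
      Matrix.smul_mul, Matrix.mul_smul, smul_add, smul_smul, RCLike.star_def, Matrix.mul_assoc]
    rw [hcconj θ, one_smul]
    abel
  -- vanishing cross terms
  have hT2 : ∀ k l, (∫ θ in (0:ℝ)..(2 * Real.pi), e θ * ((A * M θ * C) k l)) = 0 := by
    intro k l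
    have hrw : ∀ θ : ℝ, e θ * ((A * M θ * C) k l)
        = ∑ y : Fin n, ∑ x : Fin n, (A k x * C y l) * (e θ * M θ x y) := by
      intro θ
      simp only [Matrix.mul_apply, Finset.mul_sum, Finset.sum_mul]
      exact Finset.sum_congr rfl fun y _ => Finset.sum_congr rfl fun x _ => by ring
    simp only [hrw]
    rw [intervalIntegral.integral_finset_sum]
    · refine Finset.sum_eq_zero fun y _ => ?_
      rw [intervalIntegral.integral_finset_sum]
      · refine Finset.sum_eq_zero fun x _ => ?_
        rw [intervalIntegral.integral_const_mul, hkey x y, mul_zero]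
      · intro x _
        exact (continuous_const.mul (hecont.mul (hMcont.matrix_elem x y))).intervalIntegrable _ _
    · intro y _
      apply Continuous.intervalIntegrable
      exact continuous_finset_sum _ fun x _ =>
        continuous_const.mul (hecont.mul (hMcont.matrix_elem x y))
  have hT3 : ∀ k l,
      (∫ θ in (0:ℝ)..(2 * Real.pi), (starRingEnd ℂ) (e θ) * ((C * (M θ)ᴴ * Aᴴ) k l)) = 0 := by
    intro k l
    have hrw : ∀ θ : ℝ, (starRingEnd ℂ) (e θ) * ((C * (M θ)ᴴ * Aᴴ) k l)
        = (starRingEnd ℂ) (e θ * ((A * M θ * C) l k)) := by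
      intro θ
      rw [_root_.map_mul]
      congr 1
      have hct : C * (M θ)ᴴ * Aᴴ = (A * M θ * C)ᴴ := by
        rw [conjTranspose_mul, conjTranspose_mul, hCdef, conjTranspose_mul,
          conjTranspose_conjTranspose, Matrix.mul_assoc]
      rw [hct, conjTranspose_apply, RCLike.star_def]
    simp only [hrw]
    rw [intervalIntegral_conj, hT2 l k, map_zero]
  -- the A ⬝ 𝒢 ⬝ Aᴴ term
  have hT4 : ∀ k l, (A * 𝒢 * Aᴴ) k l
      = (1 / (2 * Real.pi) : ℂ) *
          ∫ θ in (0:ℝ)..(2 * Real.pi), (A * (M θ * C * (M θ)ᴴ) * Aᴴ) k l := by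
    intro k l
    have hrw : ∀ θ : ℝ, (A * (M θ * C * (M θ)ᴴ) * Aᴴ) k l
        = ∑ y : Fin n, ∑ x : Fin n, (A k x * Aᴴ y l) * ((M θ * C * (M θ)ᴴ) x y) := by
      intro θ
      simp only [Matrix.mul_apply, Finset.mul_sum, Finset.sum_mul]
      exact Finset.sum_congr rfl fun y _ => Finset.sum_congr rfl fun x _ =>
        Finset.sum_congr rfl fun a _ => Finset.sum_congr rfl fun b _ => by ring
    calc (A * 𝒢 * Aᴴ) k l
        = ∑ y : Fin n, ∑ x : Fin n, (A k x * Aᴴ y l) * 𝒢 x y := by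
          simp only [Matrix.mul_apply, Finset.sum_mul]
          exact Finset.sum_congr rfl fun y _ => Finset.sum_congr rfl fun x _ => by ring
      _ = (1 / (2 * Real.pi) : ℂ) * ∑ y : Fin n, ∑ x : Fin n,
            (A k x * Aᴴ y l) * ∫ θ in (0:ℝ)..(2 * Real.pi), (M θ * C * (M θ)ᴴ) x y := by
          simp only [h𝒢', Finset.mul_sum]
          exact Finset.sum_congr rfl fun y _ => Finset.sum_congr rfl fun x _ => by ring
      _ = (1 / (2 * Real.pi) : ℂ) * ∫ θ in (0:ℝ)..(2 * Real.pi),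
            ∑ y : Fin n, ∑ x : Fin n, (A k x * Aᴴ y l) * ((M θ * C * (M θ)ᴴ) x y) := by
          congr 1
          rw [intervalIntegral.integral_finset_sum]
          · refine Finset.sum_congr rfl fun y _ => ?_
            rw [intervalIntegral.integral_finset_sum]
            · exact Finset.sum_congr rfl fun x _ =>
                (intervalIntegral.integral_const_mul _ _).symm
            · intro x _
              exact (continuous_const.mul (hPC.matrix_elem x y)).intervalIntegrable _ _
          · intro y _
            apply Continuous.intervalIntegrable
            exact continuous_finset_sum _ fun x _ =>
              continuous_const.mul (hPC.matrix_elem x y)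
      _ = (1 / (2 * Real.pi) : ℂ) *
            ∫ θ in (0:ℝ)..(2 * Real.pi), (A * (M θ * C * (M θ)ᴴ) * Aᴴ) k l := by
          congr 1
          exact intervalIntegral.integral_congr fun θ _ => (hrw θ).symm
  -- splitting the integral
  have hI : ∀ k l, (∫ θ in (0:ℝ)..(2 * Real.pi), (M θ * C * (M θ)ᴴ) k l)
      = (2 * Real.pi : ℝ) • C k l
        + ∫ θ in (0:ℝ)..(2 * Real.pi), (A * (M θ * C * (M θ)ᴴ) * Aᴴ) k l := by
    intro k l
    have hsplit : (∫ θ in (0:ℝ)..(2 * Real.pi), (M θ * C * (M θ)ᴴ) k l)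
        = ∫ θ in (0:ℝ)..(2 * Real.pi),
            (C k l + e θ * ((A * M θ * C) k l)
              + (starRingEnd ℂ) (e θ) * ((C * (M θ)ᴴ * Aᴴ) k l)
              + (A * (M θ * C * (M θ)ᴴ) * Aᴴ) k l) := by
      refine intervalIntegral.integral_congr fun θ _ => ?_
      conv_lhs => rw [hP θ]
      simp [Matrix.add_apply, Matrix.smul_apply, smul_eq_mul]
    rw [hsplit]
    have i1 : IntervalIntegrable (fun _ : ℝ => C k l) MeasureTheory.volume 0 (2 * Real.pi) :=
      intervalIntegrable_const
    have i2 : IntervalIntegrable (fun θ : ℝ => e θ * ((A * M θ * C) k l))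
        MeasureTheory.volume 0 (2 * Real.pi) :=
      (hecont.mul (hAMC.matrix_elem k l)).intervalIntegrable _ _
    have i3 : IntervalIntegrable (fun θ : ℝ => (starRingEnd ℂ) (e θ) * ((C * (M θ)ᴴ * Aᴴ) k l))
        MeasureTheory.volume 0 (2 * Real.pi) :=
      (hconjcont.mul (hCMA.matrix_elem k l)).intervalIntegrable _ _
    have i4 : IntervalIntegrable (fun θ : ℝ => (A * (M θ * C * (M θ)ᴴ) * Aᴴ) k l)
        MeasureTheory.volume 0 (2 * Real.pi) :=
      (hAPA.matrix_elem k l).intervalIntegrable _ _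
    rw [intervalIntegral.integral_add ((i1.add i2).add i3) i4,
      intervalIntegral.integral_add (i1.add i2) i3,
      intervalIntegral.integral_add i1 i2,
      hT2 k l, hT3 k l, intervalIntegral.integral_const, add_zero, add_zero, sub_zero]
  -- put everything together
  have hc2π : (1 / (2 * Real.pi) : ℂ) * ((2 * Real.pi : ℝ) : ℂ) = 1 := by
    have h2π : ((2:ℂ) * Real.pi) ≠ 0 :=
      mul_ne_zero two_ne_zero (Complex.ofReal_ne_zero.mpr Real.pi_ne_zero)
    push_cast
    rw [one_div, inv_mul_cancel₀ h2π]
  ext i j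
  rw [Matrix.add_apply, h𝒢' i j, hI i j, mul_add, ← hT4 i j]
  rw [Complex.real_smul, ← mul_assoc, hc2π, one_mul, add_comm]
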